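/- arXiv:2205.03965 — 2 statements merged into one kernel-verified Lean document; each statement's English description precedes it below -/
import Mathlib

section
/- The graph K₃,₃ − e, obtained from the complete bipartite graph K₃,₃ by deleting one edge, satisfies K₃,₃ − e → (2K₂, C₄): every red-blue colouring of its edges contains either a red matching with 2 edges or a blue 4-cycle. -/
open SimpleGraph

/-- `G` contains a copy of `H`, i.e. there is an injective graph homomorphism from `H` to `G`. -/
def ContainsCopy {V W : Type*} (G : SimpleGraph V) (H : SimpleGraph W) : Prop :=
  ∃ f : H →g G, Function.Injective f

/-- `G` arrows `(G₁, G₂)`: for every red/blue colouring of the edges of `G`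
(given by a subgraph `R ≤ G` of red edges, the blue edges being `G \ R`),
there is a red copy of `G₁` or a blue copy of `G₂`. -/
def Arrows {V V₁ V₂ : Type*} (G : SimpleGraph V) (G₁ : SimpleGraph V₁) (G₂ : SimpleGraph V₂) :
    Prop :=
  ∀ R : SimpleGraph V, R ≤ G → ContainsCopy R G₁ ∨ ContainsCopy (G \ R) G₂

/-- The matching `nK₂` with `n` edges. -/
def Matching (n : ℕ) : SimpleGraph (Fin n × Fin 2) where
  Adj a b := a.1 = b.1 ∧ a.2 ≠ b.2
  symm := by constructor; intro a b h; exact ⟨h.1.symm, h.2.symm⟩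
  loopless := by constructor; intro a h; exact h.2 rfl

/-- `n` disjoint copies of the graph `H`. -/
def Copies (n : ℕ) {W : Type*} (H : SimpleGraph W) : SimpleGraph (Fin n × W) where
  Adj a b := a.1 = b.1 ∧ H.Adj a.2 b.2
  symm := by constructor; intro a b h; exact ⟨h.1.symm, h.2.symm⟩
  loopless := by constructor; intro a h; exact H.loopless.irrefl _ h.2

/-- Disjoint union of two graphs. -/
def DisjUnion {V W : Type*} (G : SimpleGraph V) (H : SimpleGraph W) : SimpleGraph (V ⊕ W) where
  Adj a b :=
    match a, b with
    | Sum.inl x, Sum.inl y => G.Adj x y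
    | Sum.inr x, Sum.inr y => H.Adj x y
    | _, _ => False
  symm := by
    constructor
    rintro (x | x) (y | y) h
    · exact G.adj_symm h
    · exact h.elim
    · exact h.elim
    · exact H.adj_symm h
  loopless := by
    constructor
    rintro (x | x) h
    · exact G.loopless.irrefl _ h
    · exact H.loopless.irrefl _ h

/-- The graph `K₃,₃ − e`: the complete bipartite graph `K₃,₃` with one edge deleted. -/
def K33MinusE : SimpleGraph (Fin 3 ⊕ Fin 3) :=
  (completeBipartiteGraph (Fin 3) (Fin 3)).deleteEdges {s(Sum.inl 0, Sum.inr 0)}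

lemma matching2_copy {V : Type*} {R : SimpleGraph V} {a b c d : V}
    (hab : R.Adj a b) (hcd : R.Adj c d)
    (h1 : a ≠ c) (h2 : a ≠ d) (h3 : b ≠ c) (h4 : b ≠ d) :
    ContainsCopy R (Matching 2) := by
  have h5 : a ≠ b := R.ne_of_adj hab
  have h6 : c ≠ d := R.ne_of_adj hcd
  refine ⟨⟨fun p => if p.1 = 0 then (if p.2 = 0 then a else b)
      else (if p.2 = 0 then c else d), ?_⟩, ?_⟩
  · rintro ⟨i, j⟩ ⟨i', j'⟩ ⟨hi, hj⟩
    simp only at hi hj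
    subst hi
    fin_cases i <;> fin_cases j <;> fin_cases j' <;>
      first
        | exact absurd rfl hj
        | exact hab | exact hab.symm | exact hcd | exact hcd.symm
  · rintro ⟨i, j⟩ ⟨i', j'⟩ h
    fin_cases i <;> fin_cases j <;> fin_cases i' <;> fin_cases j' <;>
      first
        | rfl
        | exact absurd h h1 | exact absurd h h1.symm
        | exact absurd h h2 | exact absurd h h2.symm
        | exact absurd h h3 | exact absurd h h3.symm
        | exact absurd h h4 | exact absurd h h4.symm
        | exact absurd h h5 | exact absurd h h5.symm
        | exact absurd h h6 | exact absurd h h6.symm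

lemma cycle4_copy {V : Type*} {B : SimpleGraph V} {a b c d : V}
    (hab : B.Adj a b) (hbc : B.Adj b c) (hcd : B.Adj c d) (hda : B.Adj d a)
    (hac : a ≠ c) (hbd : b ≠ d) :
    ContainsCopy B (cycleGraph 4) := by
  have h1 : a ≠ b := B.ne_of_adj hab
  have h2 : b ≠ c := B.ne_of_adj hbc
  have h3 : c ≠ d := B.ne_of_adj hcd
  have h4 : d ≠ a := B.ne_of_adj hda
  refine ⟨⟨fun i => if i = 0 then a else if i = 1 then b else if i = 2 then c else d, ?_⟩, ?_⟩
  · intro i j hij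
    fin_cases i <;> fin_cases j <;>
      first
        | exact absurd hij (by decide)
        | exact hab | exact hab.symm | exact hbc | exact hbc.symm
        | exact hcd | exact hcd.symm | exact hda | exact hda.symm
  · intro i j h
    fin_cases i <;> fin_cases j <;>
      first
        | rfl
        | exact absurd h h1 | exact absurd h h1.symm
        | exact absurd h h2 | exact absurd h h2.symm
        | exact absurd h h3 | exact absurd h h3.symm
        | exact absurd h h4 | exact absurd h h4.symm
        | exact absurd h hac | exact absurd h hac.symm
        | exact absurd h hbd | exact absurd h hbd.symm

set_option maxRecDepth 8000 in
lemma key : ∀ col : Fin 3 → Fin 3 → Bool, col 0 0 = false →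
    (∃ i1 j1 i2 j2 : Fin 3, col i1 j1 = true ∧ col i2 j2 = true ∧ i1 ≠ i2 ∧ j1 ≠ j2) ∨
    (∃ i1 j1 i2 j2 : Fin 3, i1 ≠ i2 ∧ j1 ≠ j2 ∧
      ¬(i1 = 0 ∧ j1 = 0) ∧ ¬(i2 = 0 ∧ j1 = 0) ∧ ¬(i2 = 0 ∧ j2 = 0) ∧ ¬(i1 = 0 ∧ j2 = 0) ∧
      col i1 j1 = false ∧ col i2 j1 = false ∧ col i2 j2 = false ∧ col i1 j2 = false) := by
  decide

lemma K33_adj {i j : Fin 3} :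
    K33MinusE.Adj (Sum.inl i) (Sum.inr j) ↔ ¬(i = 0 ∧ j = 0) := by
  simp only [K33MinusE, deleteEdges_adj, completeBipartiteGraph]
  constructor
  · rintro ⟨-, h⟩ ⟨rfl, rfl⟩
    exact h rfl
  · intro h
    refine ⟨Or.inl ⟨rfl, rfl⟩, ?_⟩
    intro hmem
    rw [Set.mem_singleton_iff, Sym2.eq_iff] at hmem
    rcases hmem with ⟨h1, h2⟩ | ⟨h1, h2⟩
    · exact h ⟨Sum.inl.inj h1, Sum.inr.inj h2⟩
    · exact absurd h1 (by simp)

/-- `K₃,₃ − e` arrows `(2K₂, C₄)`: every red-blue colouring of its edges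
contains either a red matching with 2 edges or a blue 4-cycle. -/
theorem K33_minus_e_arrows_matching2_cycle4 : Arrows K33MinusE (Matching 2) (cycleGraph 4) := by
  classical
  intro R hR
  set col : Fin 3 → Fin 3 → Bool := fun i j => decide (R.Adj (Sum.inl i) (Sum.inr j)) with hcol
  have hradj : ∀ i j, col i j = true ↔ R.Adj (Sum.inl i) (Sum.inr j) := by
    intro i j; simp [hcol]
  have hnradj : ∀ i j, col i j = false → ¬ R.Adj (Sum.inl i) (Sum.inr j) := by
    intro i j h; simpa [hcol] using h
  have hcol00 : col 0 0 = false := by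
    rw [hcol]
    simp only [decide_eq_false_iff_not]
    intro h
    exact (K33_adj.1 (hR h)) ⟨rfl, rfl⟩
  rcases key col hcol00 with
    ⟨i1, j1, i2, j2, h1, h2, hi, hj⟩ |
    ⟨i1, j1, i2, j2, hi, hj, e1, e2, e3, e4, c1, c2, c3, c4⟩
  · left
    exact matching2_copy ((hradj _ _).1 h1) ((hradj _ _).1 h2)
      (by simp [hi]) (by simp) (by simp) (by simp [hj])
  · right
    have badj : ∀ i j, ¬(i = 0 ∧ j = 0) → col i j = false →
        (K33MinusE \ R).Adj (Sum.inl i) (Sum.inr j) := by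
      intro i j hne hc
      rw [sdiff_adj]
      exact ⟨K33_adj.2 hne, hnradj i j hc⟩
    exact cycle4_copy (badj i1 j1 e1 c1) ((badj i2 j1 e2 c2).symm)
      (badj i2 j2 e3 c3) ((badj i1 j2 e4 c4).symm) (by simp [hi]) (by simp [hj])
end

section
/- Let n be a positive integer and let G be a connected graph with at most 4n−2 edges such that G → (nK₂, C₃). Suppose that for every positive integer k, every connected graph G′ with either fewer vertices than G, or the same number of vertices and fewer edges than G, satisfies G′ ↛ (kK₂, C₃) whenever G′ has at most 4k−2 edges. Then G is 2-connected: G has at least three vertices and for every vertex v of G the graph G − v is connected. -/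
open SimpleGraph

namespace TC

variable {α : Type*}

lemma fin2_cases (x : Fin 2) : x = 0 ∨ x = 1 := by
  rcases x with ⟨_ | _, h⟩
  · exact Or.inl rfl
  · exact Or.inr (by ext; simp; omega)

/-- pairwise disjointness of a system of pairs -/
def PD {m : ℕ} (p : Fin m → α × α) : Prop :=
  ∀ i j, i ≠ j → (p i).1 ≠ (p j).1 ∧ (p i).1 ≠ (p j).2 ∧
    (p i).2 ≠ (p j).1 ∧ (p i).2 ≠ (p j).2

lemma copy_matching_of {m : ℕ} {R : SimpleGraph α} (p : Fin m → α × α)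
    (hadj : ∀ i, R.Adj (p i).1 (p i).2) (hpd : PD p) :
    ContainsCopy R (Matching m) := by
  classical
  set f : Fin m × Fin 2 → α := fun a => if a.2 = 0 then (p a.1).1 else (p a.1).2 with hf
  have hfv : ∀ i : Fin m, f (i, 0) = (p i).1 ∧ f (i, 1) = (p i).2 := by
    intro i
    constructor <;> simp [hf]
  have hmap : ∀ {a b : Fin m × Fin 2}, (Matching m).Adj a b → R.Adj (f a) (f b) := by
    rintro ⟨i, s⟩ ⟨j, t⟩ ⟨h1, h2⟩
    simp only at h1
    subst h1
    rcases fin2_cases s with rfl | rfl <;> rcases fin2_cases t with rfl | rfl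
    · exact absurd rfl h2
    · rw [(hfv i).1, (hfv i).2]; exact hadj i
    · rw [(hfv i).1, (hfv i).2]; exact (hadj i).symm
    · exact absurd rfl h2
  have hinj : Function.Injective f := by
    rintro ⟨i, s⟩ ⟨j, t⟩ h
    by_cases hij : i = j
    · subst hij
      rcases fin2_cases s with rfl | rfl <;> rcases fin2_cases t with rfl | rfl
      · rfl
      · rw [(hfv i).1, (hfv i).2] at h; exact absurd h (R.ne_of_adj (hadj i))
      · rw [(hfv i).1, (hfv i).2] at h; exact absurd h.symm (R.ne_of_adj (hadj i))
      · rfl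
    · exfalso
      obtain ⟨h1, h2, h3, h4⟩ := hpd i j hij
      rcases fin2_cases s with rfl | rfl <;> rcases fin2_cases t with rfl | rfl
      · rw [(hfv i).1, (hfv j).1] at h; exact h1 h
      · rw [(hfv i).1, (hfv j).2] at h; exact h2 h
      · rw [(hfv i).2, (hfv j).1] at h; exact h3 h
      · rw [(hfv i).2, (hfv j).2] at h; exact h4 h
  exact ⟨⟨f, hmap⟩, hinj⟩

lemma copy_matching_elim {m : ℕ} {R : SimpleGraph α}
    (h : ContainsCopy R (Matching m)) :
    ∃ p : Fin m → α × α, (∀ i, R.Adj (p i).1 (p i).2) ∧ PD p := by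
  obtain ⟨f, hf⟩ := h
  refine ⟨fun i => (f (i, 0), f (i, 1)), fun i => f.map_adj (show (Matching m).Adj (i,0) (i,1) from ⟨rfl, fun hc => by simpa using congrArg Fin.val hc⟩), ?_⟩
  intro i j hij
  refine ⟨?_, ?_, ?_, ?_⟩ <;> intro h <;>
    exact hij (congrArg Prod.fst (hf h))

lemma copy_matching_mono {m m' : ℕ} {R : SimpleGraph α} (h : m' ≤ m)
    (hc : ContainsCopy R (Matching m)) : ContainsCopy R (Matching m') := by
  obtain ⟨p, hadj, hpd⟩ := copy_matching_elim hc
  exact copy_matching_of (fun i => p (Fin.castLE h i))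
    (fun i => hadj _)
    (fun i j hij => hpd _ _ (fun hh => hij (by exact Fin.castLE_injective h hh)))

lemma copy_matching_of_subset {m m' : ℕ} {R : SimpleGraph α} (p : Fin m → α × α)
    (hpd : PD p) (A : Finset (Fin m)) (hcard : m' ≤ A.card)
    (hadj : ∀ i ∈ A, R.Adj (p i).1 (p i).2) :
    ContainsCopy R (Matching m') := by
  obtain ⟨T, hTA, hT⟩ := Finset.exists_subset_card_eq hcard
  let e := T.orderEmbOfFin hT
  refine copy_matching_of (fun i => p (e i)) (fun i => hadj _ (hTA (T.orderEmbOfFin_mem hT i)))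
    (fun i j hij => hpd _ _ (fun hh => hij (e.injective hh)))

lemma matching_split {R₁ R₂ : SimpleGraph α} {m₁ m₂ : ℕ}
    (h1 : ¬ ContainsCopy R₁ (Matching (m₁ + 1)))
    (h2 : ¬ ContainsCopy R₂ (Matching (m₂ + 1))) :
    ¬ ContainsCopy (R₁ ⊔ R₂) (Matching (m₁ + m₂ + 1)) := by
  classical
  intro hc
  obtain ⟨p, hadj, hpd⟩ := copy_matching_elim hc
  set A : Finset (Fin (m₁ + m₂ + 1)) :=
    Finset.univ.filter (fun i => R₁.Adj (p i).1 (p i).2) with hA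
  have hAcard : A.card ≤ m₁ := by
    by_contra hlt
    exact h1 (copy_matching_of_subset p hpd A (by omega)
      (fun i hi => by simpa [hA] using (Finset.mem_filter.1 hi).2))
  have hBcard : Aᶜ.card ≤ m₂ := by
    by_contra hlt
    refine h2 (copy_matching_of_subset p hpd Aᶜ (by omega) (fun i hi => ?_))
    have hni : ¬ R₁.Adj (p i).1 (p i).2 := by
      simpa [hA] using (Finset.mem_compl.1 hi)
    rcases hadj i with h | h
    · exact absurd h hni
    · exact h
  have := Finset.card_add_card_compl A
  rw [Fintype.card_fin] at this
  omega


lemma copy_triangle_of {B : SimpleGraph α} {a b c : α}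
    (hab : B.Adj a b) (hbc : B.Adj b c) (hac : B.Adj a c) :
    ContainsCopy B (cycleGraph 3) := by
  classical
  have hinj : Function.Injective (![a, b, c]) := by
    intro i j h
    fin_cases i <;> fin_cases j <;> first
      | rfl
      | (exfalso; revert h; simp [B.ne_of_adj hab, B.ne_of_adj hbc, B.ne_of_adj hac,
          (B.ne_of_adj hab).symm, (B.ne_of_adj hbc).symm, (B.ne_of_adj hac).symm])
  refine ⟨⟨![a, b, c], ?_⟩, hinj⟩
  intro i j hij
  rw [cycleGraph_three_eq_top] at hij
  have : i ≠ j := hij.ne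
  fin_cases i <;> fin_cases j <;> first
    | exact absurd rfl this
    | simpa using hab
    | simpa using hbc
    | simpa using hac
    | simpa using hab.symm
    | simpa using hbc.symm
    | simpa using hac.symm

lemma copy_triangle_elim {B : SimpleGraph α}
    (h : ContainsCopy B (cycleGraph 3)) :
    ∃ a b c : α, B.Adj a b ∧ B.Adj b c ∧ B.Adj a c := by
  obtain ⟨f, _⟩ := h
  have h01 : (cycleGraph 3).Adj 0 1 := by rw [cycleGraph_three_eq_top]; simp [Fin.ext_iff]
  have h12 : (cycleGraph 3).Adj 1 2 := by rw [cycleGraph_three_eq_top]; simp [Fin.ext_iff]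
  have h02 : (cycleGraph 3).Adj 0 2 := by rw [cycleGraph_three_eq_top]; simp [Fin.ext_iff]
  exact ⟨f 0, f 1, f 2, f.map_adj h01, f.map_adj h12, f.map_adj h02⟩

lemma arrows_zero (H : SimpleGraph α) : Arrows H (Matching 0) (cycleGraph 3) := by
  intro R _
  exact Or.inl ⟨⟨fun a => a.1.elim0, fun {a} => a.1.elim0⟩, fun a => a.1.elim0⟩

lemma arrows_card_le {α : Type*} [Finite α] {H : SimpleGraph α} {m : ℕ}
    (h : Arrows H (Matching m) (cycleGraph 3)) : m ≤ Nat.card α := by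
  rcases h H le_rfl with ⟨f, hf⟩ | ⟨f, hf⟩
  · have := Nat.card_le_card_of_injective f hf
    simp [Nat.card_eq_fintype_card] at this
    omega
  · exfalso
    have h01 : (cycleGraph 3).Adj 0 1 := by rw [cycleGraph_three_eq_top]; simp [Fin.ext_iff]
    have := f.map_adj h01
    rw [sdiff_adj] at this
    exact this.2 this.1

/-- lifting a colouring of an induced subgraph to the ambient vertex set -/
def liftG (s : Set α) (R : SimpleGraph ↥s) : SimpleGraph α where
  Adj x y := ∃ hx : x ∈ s, ∃ hy : y ∈ s, R.Adj ⟨x, hx⟩ ⟨y, hy⟩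
  symm := by constructor; rintro x y ⟨hx, hy, h⟩; exact ⟨hy, hx, h.symm⟩
  loopless := by constructor; rintro x ⟨hx, hy, h⟩; exact R.loopless.irrefl _ h

lemma liftG_copy_matching {s : Set α} {R : SimpleGraph ↥s} {m : ℕ}
    (h : ContainsCopy (liftG s R) (Matching m)) : ContainsCopy R (Matching m) := by
  obtain ⟨p, hadj, hpd⟩ := copy_matching_elim h
  refine copy_matching_of
    (fun i => (⟨(p i).1, (hadj i).choose⟩, ⟨(p i).2, (hadj i).choose_spec.choose⟩))
    (fun i => (hadj i).choose_spec.choose_spec) ?_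
  intro i j hij
  obtain ⟨h1, h2, h3, h4⟩ := hpd i j hij
  exact ⟨fun h => h1 (congrArg Subtype.val h), fun h => h2 (congrArg Subtype.val h),
    fun h => h3 (congrArg Subtype.val h), fun h => h4 (congrArg Subtype.val h)⟩

lemma liftG_le {s : Set α} {G : SimpleGraph α} {R : SimpleGraph ↥s}
    (h : R ≤ G.induce s) : liftG s R ≤ G := by
  rintro x y ⟨hx, hy, hadj⟩
  exact h hadj

lemma liftG_mem {s : Set α} {R : SimpleGraph ↥s} {x y : α} (h : (liftG s R).Adj x y) :
    x ∈ s ∧ y ∈ s :=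
  ⟨h.choose, h.choose_spec.choose⟩

lemma liftG_adj_of {s : Set α} {R : SimpleGraph ↥s} {x y : α} (hx : x ∈ s) (hy : y ∈ s)
    (h : R.Adj ⟨x, hx⟩ ⟨y, hy⟩) : (liftG s R).Adj x y := ⟨hx, hy, h⟩

lemma liftG_adj_elim {s : Set α} {R : SimpleGraph ↥s} {x y : α} (hx : x ∈ s) (hy : y ∈ s)
    (h : ¬ (liftG s R).Adj x y) : ¬ R.Adj ⟨x, hx⟩ ⟨y, hy⟩ :=
  fun hr => h ⟨hx, hy, hr⟩

lemma not_arrows_elim {W : Type*} {H : SimpleGraph W} {m : ℕ}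
    (h : ¬ Arrows H (Matching m) (cycleGraph 3)) :
    ∃ R ≤ H, ¬ ContainsCopy R (Matching m) ∧ ¬ ContainsCopy (H \ R) (cycleGraph 3) := by
  simp only [Arrows, not_forall] at h
  obtain ⟨R, hR, h⟩ := h
  push_neg at h
  exact ⟨R, hR, h.1, h.2⟩

end TC

namespace TC

section EdgeCount

variable {α : Type*} (G : SimpleGraph α)

/-- edges of `G` lying inside `s` -/
def EinS (s : Set α) : Set (Sym2 α) := {e | e ∈ G.edgeSet ∧ ∀ x ∈ e, x ∈ s}

/-- neighbours of `v` inside `s` -/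
def NvS (v : α) (s : Set α) : Set α := {z | z ∈ s ∧ G.Adj v z}

lemma image_induce_edgeSet (s : Set α) :
    Sym2.map Subtype.val '' (G.induce s).edgeSet = EinS G s := by
  ext e
  constructor
  · rintro ⟨e', he', rfl⟩
    induction e' using Sym2.ind with
    | _ a b =>
      rw [Sym2.map_pair_eq]
      rw [SimpleGraph.mem_edgeSet] at he'
      have hadj : G.Adj a.val b.val := by simpa using he'
      refine ⟨hadj, ?_⟩
      intro x hx
      rw [Sym2.mem_iff] at hx
      rcases hx with rfl | rfl
      exacts [a.2, b.2]
  · intro he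
    induction e using Sym2.ind with
    | _ a b =>
      obtain ⟨hadj, hmem⟩ := he
      rw [SimpleGraph.mem_edgeSet] at hadj
      have ha : a ∈ s := hmem a (by simp)
      have hb : b ∈ s := hmem b (by simp)
      exact ⟨s(⟨a, ha⟩, ⟨b, hb⟩), by simpa using hadj, by rw [Sym2.map_pair_eq]⟩

lemma ncard_induce_edgeSet (s : Set α) :
    (G.induce s).edgeSet.ncard = (EinS G s).ncard := by
  rw [← image_induce_edgeSet, Set.ncard_image_of_injective _
    (Sym2.map.injective Subtype.val_injective)]

lemma EinS_mono {s t : Set α} (h : s ⊆ t) : EinS G s ⊆ EinS G t :=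
  fun e he => ⟨he.1, fun x hx => h (he.2 x hx)⟩

lemma EinS_subset_edgeSet (s : Set α) : EinS G s ⊆ G.edgeSet := fun _ he => he.1

lemma EinS_disjoint {s t : Set α}
    (h : ∀ x y, G.Adj x y → x ∈ s ∩ t → y ∈ s ∩ t → False) :
    Disjoint (EinS G s) (EinS G t) := by
  rw [Set.disjoint_left]
  intro e hes het
  induction e using Sym2.ind with
  | _ a b =>
    have hadj : G.Adj a b := hes.1
    exact h a b hadj ⟨hes.2 a (by simp), het.2 a (by simp)⟩
      ⟨hes.2 b (by simp), het.2 b (by simp)⟩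

variable [Finite α]

lemma EinS_union_ncard {s t : Set α}
    (h : ∀ x y, G.Adj x y → x ∈ s ∩ t → y ∈ s ∩ t → False) :
    (EinS G s).ncard + (EinS G t).ncard ≤ (EinS G (s ∪ t)).ncard := by
  rw [← Set.ncard_union_eq (EinS_disjoint G h) (Set.toFinite _) (Set.toFinite _)]
  exact Set.ncard_le_ncard
    (Set.union_subset (EinS_mono G Set.subset_union_left) (EinS_mono G Set.subset_union_right))
    (Set.toFinite _)

lemma EinS_add_NvS {v : α} {s : Set α} (hv : v ∉ s) :
    (EinS G s).ncard + (NvS G v s).ncard ≤ (EinS G (s ∪ {v})).ncard := by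
  have himg : ((fun z => s(v, z)) '' NvS G v s).ncard = (NvS G v s).ncard := by
    apply Set.ncard_image_of_injOn
    intro a ha b hb hab
    simp only [Sym2.eq, Sym2.rel_iff', Prod.mk.injEq, Prod.swap_prod_mk] at hab
    rcases hab with ⟨-, h⟩ | ⟨h1, h2⟩
    · exact h
    · exact h2.trans h1
  have hsub1 : EinS G s ⊆ EinS G (s ∪ {v}) := EinS_mono G Set.subset_union_left
  have hsub2 : ((fun z => s(v, z)) '' NvS G v s) ⊆ EinS G (s ∪ {v}) := by
    rintro e ⟨z, hz, rfl⟩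
    refine ⟨hz.2, ?_⟩
    intro x hx
    rw [Sym2.mem_iff] at hx
    rcases hx with rfl | rfl
    · exact Or.inr rfl
    · exact Or.inl hz.1
  have hdisj : Disjoint (EinS G s) ((fun z => s(v, z)) '' NvS G v s) := by
    rw [Set.disjoint_left]
    rintro e he ⟨z, hz, rfl⟩
    exact hv (he.2 v (by simp))
  calc (EinS G s).ncard + (NvS G v s).ncard
      = (EinS G s ∪ (fun z => s(v, z)) '' NvS G v s).ncard := by
        rw [Set.ncard_union_eq hdisj (Set.toFinite _) (Set.toFinite _), himg]
    _ ≤ _ := Set.ncard_le_ncard (Set.union_subset hsub1 hsub2) (Set.toFinite _)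

lemma EinS_univ : EinS G Set.univ = G.edgeSet := by
  ext e; exact ⟨fun h => h.1, fun h => ⟨h, fun x _ => trivial⟩⟩

end EdgeCount

end TC

namespace TC

variable {α : Type*}

lemma NvS_union_ncard [Finite α] (G : SimpleGraph α) (v : α) {s t : Set α}
    (hdisj : Disjoint s t) :
    (NvS G v s).ncard + (NvS G v t).ncard ≤ (NvS G v (s ∪ t)).ncard := by
  have hU : NvS G v s ∪ NvS G v t = NvS G v (s ∪ t) := by
    ext z
    simp only [NvS, Set.mem_union, Set.mem_setOf_eq]
    tauto
  rw [← hU, Set.ncard_union_eq (hdisj.mono (fun z hz => hz.1) (fun z hz => hz.1))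
    (Set.toFinite _) (Set.toFinite _)]

lemma walk_transfer {Gd G : SimpleGraph α} {s : Set α} (hle : Gd ≤ G)
    (hcl : ∀ x y, x ∈ s → Gd.Adj x y → y ∈ s) :
    ∀ {x y : α}, Gd.Walk x y → ∀ hx : x ∈ s,
      ∃ hy : y ∈ s, (G.induce s).Reachable ⟨x, hx⟩ ⟨y, hy⟩ := by
  intro x y w
  induction w with
  | nil => intro hx; exact ⟨hx, Reachable.refl _⟩
  | @cons x' y' z' h w ih =>
    intro hx
    have hy' : y' ∈ s := hcl _ _ hx h
    obtain ⟨hy, hr⟩ := ih hy'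
    refine ⟨hy, Reachable.trans ?_ hr⟩
    exact SimpleGraph.Adj.reachable (by simpa using hle h)

lemma exists_adj_of_walk {G : SimpleGraph α} {v : α} {s : Set α}
    (hcl : ∀ x y, x ∈ s → G.Adj x y → y ≠ v → y ∈ s) (hv : v ∉ s) :
    ∀ {x y : α}, G.Walk x y → y = v → x ∈ s → ∃ z ∈ s, G.Adj v z := by
  intro x y w
  induction w with
  | nil => intro hy hx; subst hy; exact absurd hx hv
  | @cons x' y' z' h w ih =>
    intro hz hx
    by_cases hyv : y' = v
    · subst hyv; exact ⟨x', hx, h.symm⟩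
    · exact ih hz (hcl _ _ hx h hyv)

lemma reachable_induce_mono {G : SimpleGraph α} {s t : Set α} (h : s ⊆ t) {a b : ↥s}
    (hr : (G.induce s).Reachable a b) :
    (G.induce t).Reachable ⟨a.1, h a.2⟩ ⟨b.1, h b.2⟩ := by
  exact hr.map (⟨Set.inclusion h, fun ha => by simpa using ha⟩ : G.induce s →g G.induce t)

lemma side3 {s t : Set α} {Gr : SimpleGraph α} {v : α}
    (cross : ∀ x y, Gr.Adj x y → x ∈ s → y ∈ t → False)
    (mem : ∀ x, x ∈ s ∨ x ∈ t ∨ x = v)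
    {a b d : α} (hab : Gr.Adj a b) (hbd : Gr.Adj b d) (had : Gr.Adj a d) :
    (a ∈ s ∪ {v} ∧ b ∈ s ∪ {v} ∧ d ∈ s ∪ {v}) ∨
    (a ∈ t ∪ {v} ∧ b ∈ t ∪ {v} ∧ d ∈ t ∪ {v}) := by
  have cross' : ∀ x y, Gr.Adj x y → x ∈ t → y ∈ s → False :=
    fun x y h hx hy => cross y x h.symm hy hx
  rcases mem a with ha | ha | ha <;> rcases mem b with hb | hb | hb <;>
    rcases mem d with hd | hd | hd <;>
    first
      | exact (cross _ _ hab ha hb).elim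
      | exact (cross _ _ hbd hb hd).elim
      | exact (cross _ _ had ha hd).elim
      | exact (cross' _ _ hab ha hb).elim
      | exact (cross' _ _ hbd hb hd).elim
      | exact (cross' _ _ had ha hd).elim
      | exact absurd (ha.trans hb.symm) (Gr.ne_of_adj hab)
      | exact absurd (hb.trans hd.symm) (Gr.ne_of_adj hbd)
      | exact absurd (ha.trans hd.symm) (Gr.ne_of_adj had)
      | (left; refine ⟨?_, ?_, ?_⟩ <;>
          · simp only [Set.mem_union, Set.mem_singleton_iff]; tauto)
      | (right; refine ⟨?_, ?_, ?_⟩ <;>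
          · simp only [Set.mem_union, Set.mem_singleton_iff]; tauto)

lemma lift_blue {G : SimpleGraph α} {t : Set α} {R' : SimpleGraph ↥t} {a b d : α}
    (ha : a ∈ t) (hb : b ∈ t) (hd : d ∈ t)
    (hab : G.Adj a b) (hbd : G.Adj b d) (had : G.Adj a d)
    (nab : ¬ (liftG t R').Adj a b) (nbd : ¬ (liftG t R').Adj b d)
    (nad : ¬ (liftG t R').Adj a d) :
    ContainsCopy (G.induce t \ R') (cycleGraph 3) := by
  refine copy_triangle_of (a := ⟨a, ha⟩) (b := ⟨b, hb⟩) (c := ⟨d, hd⟩) ?_ ?_ ?_ <;>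
    rw [SimpleGraph.sdiff_adj]
  · exact ⟨by simpa using hab, fun h => nab ⟨ha, hb, h⟩⟩
  · exact ⟨by simpa using hbd, fun h => nbd ⟨hb, hd, h⟩⟩
  · exact ⟨by simpa using had, fun h => nad ⟨ha, hd, h⟩⟩

end TC

/-- Under the minimality hypotheses, `G` is 2-connected: it has at least
three vertices and deleting any single vertex leaves a connected graph. -/
theorem two_connected (n : ℕ) (hn : 0 < n) (V : Type) [Finite V]
    (G : SimpleGraph V) (hconn : G.Connected) (hE : G.edgeSet.ncard ≤ 4 * n - 2)
    (harrow : Arrows G (Matching n) (cycleGraph 3))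
    (hmin : ∀ k : ℕ, 0 < k → ∀ (W : Type), Finite W → ∀ H : SimpleGraph W,
      H.Connected →
      (Nat.card W < Nat.card V ∨
        (Nat.card W = Nat.card V ∧ H.edgeSet.ncard < G.edgeSet.ncard)) →
      H.edgeSet.ncard ≤ 4 * k - 2 →
      ¬ Arrows H (Matching k) (cycleGraph 3)) :
    3 ≤ Nat.card V ∧ ∀ v : V, (G.induce {w | w ≠ v}).Connected := by
  classical
  have hV3 : 3 ≤ Nat.card V := by
    by_contra hlt
    push_neg at hlt
    rcases harrow ⊥ bot_le with hred | ⟨f, hf⟩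
    · obtain ⟨p, hadj, -⟩ := TC.copy_matching_elim hred
      exact (hadj ⟨0, hn⟩).elim
    · have h3 := Nat.card_le_card_of_injective f hf
      simp only [Nat.card_eq_fintype_card, Fintype.card_fin] at h3
      omega
  refine ⟨hV3, fun v => ?_⟩
  by_contra hnc
  -- `G - v` as a graph on `V` (with `v` isolated)
  let Gd : SimpleGraph V :=
    { Adj := fun x y => G.Adj x y ∧ x ≠ v ∧ y ≠ v,
      symm := by constructor; rintro x y ⟨h1, h2, h3⟩; exact ⟨h1.symm, h3, h2⟩,
      loopless := ⟨fun x h => G.loopless.irrefl x h.1⟩ }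
  have hGdle : Gd ≤ G := fun {x y} h => h.1
  haveI : Fintype Gd.ConnectedComponent := Fintype.ofFinite _
  set cv := Gd.connectedComponentMk v with hcv
  have hmkv : ∀ x : V, Gd.connectedComponentMk x = cv → x = v := by
    intro x hx
    obtain ⟨w⟩ : Gd.Reachable v x := (SimpleGraph.ConnectedComponent.eq.mp hx).symm
    obtain ⟨hy, -⟩ := TC.walk_transfer hGdle
      (s := {v}) (fun a b ha hab => (hab.2.1 ha).elim) w rfl
    exact hy
  have hmkv' : ∀ x : V, x ≠ v → Gd.connectedComponentMk x ≠ cv :=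
    fun x hx h => hx (hmkv x h)
  have hsupp_cl : ∀ (c : Gd.ConnectedComponent) (x y : V),
      x ∈ c.supp → Gd.Adj x y → y ∈ c.supp := by
    intro c x y hx h
    rw [SimpleGraph.ConnectedComponent.mem_supp_iff] at hx ⊢
    exact (SimpleGraph.ConnectedComponent.sound h.reachable).symm.trans hx
  have hsupp_ne : ∀ (c : Gd.ConnectedComponent), c ≠ cv → ∀ x ∈ c.supp, x ≠ v := by
    intro c hc x hx hxv
    subst hxv
    exact hc (((SimpleGraph.ConnectedComponent.mem_supp_iff _ _).mp hx).symm.trans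
      hcv.symm)
  have hsupp_ne' : ∀ (c : Gd.ConnectedComponent), c ≠ cv → v ∉ c.supp :=
    fun c hc hv => hsupp_ne c hc v hv rfl
  have hconn_c : ∀ (c : Gd.ConnectedComponent), c ≠ cv → (G.induce c.supp).Connected := by
    intro c hc
    obtain ⟨x, hx⟩ := c.exists_rep
    rw [SimpleGraph.connected_iff]
    refine ⟨?_, ⟨⟨x, hx⟩⟩⟩
    intro a b
    obtain ⟨w⟩ : Gd.Reachable a.1 b.1 :=
      SimpleGraph.ConnectedComponent.eq.mp (a.2.trans b.2.symm)
    obtain ⟨hy, hrr⟩ := TC.walk_transfer hGdle (hsupp_cl c) w a.2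
    exact hrr
  have hcard_c : ∀ (c : Gd.ConnectedComponent), c ≠ cv → Nat.card ↥c.supp < Nat.card V := by
    intro c hc
    rw [Nat.card_coe_set_eq, ← Set.ncard_univ V]
    exact Set.ncard_lt_ncard
      (Set.ssubset_univ_iff.mpr (fun h => hsupp_ne' c hc (h ▸ Set.mem_univ v)))
      (Set.toFinite _)
  set karr : Gd.ConnectedComponent → ℕ := fun c =>
    Nat.findGreatest (fun m => Arrows (G.induce c.supp) (Matching m) (cycleGraph 3))
      (Nat.card ↥c.supp) with hkarr
  have hk_arrows : ∀ c, Arrows (G.induce c.supp) (Matching (karr c)) (cycleGraph 3) := by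
    intro c
    rw [hkarr]
    exact Nat.findGreatest_spec
      (P := fun m => Arrows (G.induce c.supp) (Matching m) (cycleGraph 3))
      (Nat.zero_le _) (TC.arrows_zero _)
  have hk_max : ∀ c, ¬ Arrows (G.induce c.supp) (Matching (karr c + 1)) (cycleGraph 3) := by
    intro c hc
    by_cases hle : karr c + 1 ≤ Nat.card ↥c.supp
    · rw [hkarr] at hc
      exact Nat.findGreatest_is_greatest
        (P := fun m => Arrows (G.induce c.supp) (Matching m) (cycleGraph 3))
        (Nat.lt_succ_self _) hle hc
    · have := TC.arrows_card_le hc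
      omega
  have hcomp : ∀ (c : Gd.ConnectedComponent), c ≠ cv →
      4 * karr c ≤ (TC.EinS G c.supp).ncard + (TC.NvS G v c.supp).ncard := by
    intro c hc
    by_cases hk0 : karr c = 0
    · simp [hk0]
    obtain ⟨x, hx⟩ := c.exists_rep
    obtain ⟨wlk⟩ : G.Reachable x v := hconn.preconnected x v
    obtain ⟨z, hz, hvz⟩ := TC.exists_adj_of_walk (G := G) (v := v) (s := c.supp)
      (fun a b ha hab hbv => hsupp_cl c a b ha ⟨hab, hsupp_ne c hc a ha, hbv⟩)
      (hsupp_ne' c hc) wlk rfl hx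
    have hNv : 1 ≤ (TC.NvS G v c.supp).ncard :=
      (Set.ncard_pos (Set.toFinite _)).mpr ⟨z, hz, hvz⟩
    have hEe : ¬ ((G.induce c.supp).edgeSet.ncard ≤ 4 * karr c - 2) := by
      intro hle
      exact hmin (karr c) (by omega) ↥c.supp inferInstance (G.induce c.supp)
        (hconn_c c hc) (Or.inl (hcard_c c hc)) hle (hk_arrows c)
    rw [TC.ncard_induce_edgeSet] at hEe
    omega
  -- vertex sets of collections of components
  set vs : Finset Gd.ConnectedComponent → Set V :=
    (fun S => {x : V | Gd.connectedComponentMk x ∈ S}) with hvs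
  have hvs_ne : ∀ (S : Finset Gd.ConnectedComponent), cv ∉ S → ∀ x ∈ vs S, x ≠ v := by
    intro S hS x hx hxv
    subst hxv
    exact hS hx
  have hvs_insert : ∀ (c : Gd.ConnectedComponent) (S : Finset Gd.ConnectedComponent),
      vs (insert c S) = vs S ∪ c.supp := by
    intro c S
    ext x
    simp only [hvs, Set.mem_setOf_eq, Finset.mem_insert, Set.mem_union,
      SimpleGraph.ConnectedComponent.mem_supp_iff]
    tauto
  have hvs_disj : ∀ (c : Gd.ConnectedComponent) (S : Finset Gd.ConnectedComponent),
      c ∉ S → Disjoint (vs S) c.supp := by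
    intro c S hcS
    rw [Set.disjoint_left]
    intro x hx hxc
    rw [SimpleGraph.ConnectedComponent.mem_supp_iff] at hxc
    exact hcS (hxc ▸ hx)
  have hcross : ∀ (S T : Finset Gd.ConnectedComponent), cv ∉ S → cv ∉ T →
      Disjoint S T → ∀ x y, G.Adj x y → x ∈ vs S → y ∈ vs T → False := by
    intro S T hS hT hST x y hxy hx hy
    have : Gd.connectedComponentMk x = Gd.connectedComponentMk y :=
      SimpleGraph.ConnectedComponent.sound
        (SimpleGraph.Adj.reachable ⟨hxy, hvs_ne S hS x hx, hvs_ne T hT y hy⟩)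
    exact Finset.disjoint_left.mp hST hx (this ▸ hy)
  have IND : ∀ S : Finset Gd.ConnectedComponent, cv ∉ S →
      ∃ R : SimpleGraph V, R ≤ G ∧
        (∀ x y, R.Adj x y → x ∈ vs S ∧ y ∈ vs S) ∧
        (¬ ContainsCopy R (Matching (∑ c ∈ S, karr c + 1))) ∧
        (∀ a b d : V, a ∈ vs S → b ∈ vs S → d ∈ vs S →
          G.Adj a b → G.Adj b d → G.Adj a d → R.Adj a b ∨ R.Adj b d ∨ R.Adj a d) ∧
        4 * ∑ c ∈ S, karr c ≤ (TC.EinS G (vs S)).ncard + (TC.NvS G v (vs S)).ncard := by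
    intro S
    induction S using Finset.induction_on with
    | empty =>
      intro _
      refine ⟨⊥, bot_le, ?_, ?_, ?_, ?_⟩
      · intro x y h
        exact h.elim
      · intro hcopy
        obtain ⟨p, hadj, -⟩ := TC.copy_matching_elim hcopy
        exact (hadj ⟨0, (by simp : (0:ℕ) < _)⟩).elim
      · intro a b d ha
        exact absurd ha (by simp [hvs])
      · simp
    | @insert c S hcS ih =>
      intro hcv
      have hc_ne : c ≠ cv := fun h => hcv (h ▸ Finset.mem_insert_self c S)
      have hcvS : cv ∉ S := fun h => hcv (Finset.mem_insert_of_mem h)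
      obtain ⟨R, hRle, hRmem, hRmat, hRtri, hRcnt⟩ := ih hcvS
      obtain ⟨R₀, hR₀le, hR₀mat, hR₀tri⟩ := TC.not_arrows_elim (hk_max c)
      set Rc := TC.liftG c.supp R₀ with hRc
      have hRcmat : ¬ ContainsCopy Rc (Matching (karr c + 1)) :=
        fun hcopy => hR₀mat (TC.liftG_copy_matching hcopy)
      refine ⟨R ⊔ Rc, sup_le hRle (TC.liftG_le hR₀le), ?_, ?_, ?_, ?_⟩
      · intro x y h
        rw [hvs_insert]
        rcases h with h | h
        · exact ⟨Or.inl (hRmem x y h).1, Or.inl (hRmem x y h).2⟩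
        · exact ⟨Or.inr (TC.liftG_mem h).1, Or.inr (TC.liftG_mem h).2⟩
      · rw [Finset.sum_insert hcS]
        have := TC.matching_split hRmat hRcmat
        have heq : ∑ c' ∈ S, karr c' + (karr c) + 1 = karr c + ∑ c' ∈ S, karr c' + 1 := by
          omega
        rwa [heq] at this
      · intro a b d ha hb hd hab hbd had
        rw [hvs_insert] at ha hb hd
        have hcross' : ∀ x y, G.Adj x y → x ∈ vs S → y ∈ c.supp → False := by
          intro x y hxy hx hy
          have : Gd.connectedComponentMk x = Gd.connectedComponentMk y :=
            SimpleGraph.ConnectedComponent.sound (SimpleGraph.Adj.reachable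
              ⟨hxy, hvs_ne S hcvS x hx, hsupp_ne c hc_ne y hy⟩)
          rw [SimpleGraph.ConnectedComponent.mem_supp_iff] at hy
          have hxc : Gd.connectedComponentMk x ∈ S := hx
          rw [this.trans hy] at hxc
          exact hcS hxc
        have hside : (a ∈ vs S ∧ b ∈ vs S ∧ d ∈ vs S) ∨
            (a ∈ c.supp ∧ b ∈ c.supp ∧ d ∈ c.supp) := by
          rcases ha with ha | ha <;> rcases hb with hb | hb <;> rcases hd with hd | hd <;>
            first
              | exact (hcross' _ _ hab ha hb).elim
              | exact (hcross' _ _ hbd hb hd).elim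
              | exact (hcross' _ _ had ha hd).elim
              | exact (hcross' _ _ hab.symm hb ha).elim
              | exact (hcross' _ _ hbd.symm hd hb).elim
              | exact (hcross' _ _ had.symm hd ha).elim
              | exact Or.inl ⟨ha, hb, hd⟩
              | exact Or.inr ⟨ha, hb, hd⟩
        rcases hside with ⟨ha', hb', hd'⟩ | ⟨ha', hb', hd'⟩
        · rcases hRtri a b d ha' hb' hd' hab hbd had with h | h | h
          · exact Or.inl (Or.inl h)
          · exact Or.inr (Or.inl (Or.inl h))
          · exact Or.inr (Or.inr (Or.inl h))
        · by_contra hno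
          push_neg at hno
          obtain ⟨nab, nbd, nad⟩ := hno
          simp only [SimpleGraph.sup_adj, not_or] at nab nbd nad
          exact hR₀tri (TC.lift_blue ha' hb' hd' hab hbd had nab.2 nbd.2 nad.2)
      · rw [Finset.sum_insert hcS, hvs_insert]
        have h1 := TC.EinS_union_ncard G (s := vs S) (t := c.supp)
          (fun x y _ hx hy => (Set.disjoint_left.mp (hvs_disj c S hcS) hx.1 hx.2).elim)
        have h2 := TC.NvS_union_ncard G v (hvs_disj c S hcS)
        have h3 := hcomp c hc_ne
        omega
  -- the union of all components, with the star at `v`, colours all of `G`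
  set Sfull : Finset Gd.ConnectedComponent := Finset.univ.erase cv with hSfull
  have hcvSfull : cv ∉ Sfull := Finset.notMem_erase _ _
  have hvsfull : vs Sfull = {x : V | x ≠ v} := by
    ext x
    simp only [hvs, Set.mem_setOf_eq, hSfull, Finset.mem_erase, Finset.mem_univ, and_true]
    constructor
    · intro h hxv
      subst hxv
      exact h rfl
    · intro h
      exact hmkv' x h
  obtain ⟨Rall, hRall_le, hRall_mem, hRall_mat, hRall_tri, hRall_cnt⟩ := IND Sfull hcvSfull
  set K := ∑ c ∈ Sfull, karr c with hK
  set Ev : SimpleGraph V :=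
    { Adj := fun x y => G.Adj x y ∧ (x = v ∨ y = v),
      symm := by constructor; rintro x y ⟨h1, h2⟩; exact ⟨h1.symm, h2.symm⟩,
      loopless := ⟨fun x h => G.loopless.irrefl x h.1⟩ } with hEvdef
  have hEv2 : ¬ ContainsCopy Ev (Matching 2) := by
    intro hcopy
    obtain ⟨p, hadj, hpd⟩ := TC.copy_matching_elim hcopy
    obtain ⟨h1, h2, h3, h4⟩ := hpd 0 1 (by decide)
    rcases (hadj 0).2 with h5 | h5 <;> rcases (hadj 1).2 with h6 | h6
    · exact h1 (h5.trans h6.symm)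
    · exact h2 (h5.trans h6.symm)
    · exact h3 (h5.trans h6.symm)
    · exact h4 (h5.trans h6.symm)
  have hRstar_mat : ¬ ContainsCopy (Rall ⊔ Ev) (Matching (K + 1 + 1)) :=
    TC.matching_split hRall_mat hEv2
  have hRstar_blue : ¬ ContainsCopy (G \ (Rall ⊔ Ev)) (cycleGraph 3) := by
    intro hcopy
    obtain ⟨a, b, d, hab, hbd, had⟩ := TC.copy_triangle_elim hcopy
    rw [SimpleGraph.sdiff_adj] at hab hbd had
    obtain ⟨hab1, hab2⟩ := hab
    obtain ⟨hbd1, hbd2⟩ := hbd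
    obtain ⟨had1, had2⟩ := had
    simp only [SimpleGraph.sup_adj, not_or] at hab2 hbd2 had2
    have hav : a ≠ v := by rintro rfl; exact hab2.2 ⟨hab1, Or.inl rfl⟩
    have hbv : b ≠ v := by rintro rfl; exact hab2.2 ⟨hab1, Or.inr rfl⟩
    have hdv : d ≠ v := by rintro rfl; exact hbd2.2 ⟨hbd1, Or.inr rfl⟩
    have hmem : ∀ x : V, x ≠ v → x ∈ vs Sfull := fun x hx => by rw [hvsfull]; exact hx
    rcases hRall_tri a b d (hmem a hav) (hmem b hbv) (hmem d hdv) hab1 hbd1 had1 with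
      h | h | h
    · exact hab2.1 h
    · exact hbd2.1 h
    · exact had2.1 h
  have hRstar_le : Rall ⊔ Ev ≤ G := sup_le hRall_le (fun {x y} h => h.1)
  have hnK : n ≤ K + 1 := by
    by_contra hlt
    push_neg at hlt
    rcases harrow (Rall ⊔ Ev) hRstar_le with hred | hblue
    · exact hRstar_mat (TC.copy_matching_mono (by omega) hred)
    · exact hRstar_blue hblue
  have htot : 4 * K ≤ G.edgeSet.ncard := by
    have h1 := TC.EinS_add_NvS G (v := v) (s := {x : V | x ≠ v}) (by simp)
    have h2 : (TC.EinS G ({x : V | x ≠ v} ∪ {v})).ncard ≤ G.edgeSet.ncard :=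
      Set.ncard_le_ncard (TC.EinS_subset_edgeSet G _) (Set.toFinite _)
    rw [hvsfull] at hRall_cnt
    omega
  -- split the components into two nonempty groups
  have hnev : Nonempty ↥{w : V | w ≠ v} := by
    have hnt : Nontrivial V := by
      rw [← Finite.one_lt_card_iff_nontrivial]
      omega
    obtain ⟨w, hw⟩ := exists_ne v
    exact ⟨⟨w, hw⟩⟩
  have hnpre : ¬ (G.induce {w : V | w ≠ v}).Preconnected := by
    intro hpre
    rw [SimpleGraph.connected_iff] at hnc
    exact hnc ⟨hpre, hnev⟩
  rw [SimpleGraph.Preconnected] at hnpre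
  push_neg at hnpre
  obtain ⟨a0, b0, hab0⟩ := hnpre
  have ha0v : a0.1 ≠ v := a0.2
  have hb0v : b0.1 ≠ v := b0.2
  set c1 := Gd.connectedComponentMk a0.1 with hc1
  set c2 := Gd.connectedComponentMk b0.1 with hc2
  have hc1v : c1 ≠ cv := hmkv' _ ha0v
  have hc2v : c2 ≠ cv := hmkv' _ hb0v
  have hc12 : c1 ≠ c2 := by
    intro h
    obtain ⟨w⟩ : Gd.Reachable a0.1 b0.1 := SimpleGraph.ConnectedComponent.eq.mp h
    obtain ⟨hy, hr⟩ := TC.walk_transfer hGdle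
      (s := {w : V | w ≠ v}) (fun x y hx hxy => hxy.2.2) w a0.2
    exact hab0 hr
  set S1 : Finset Gd.ConnectedComponent := {c1} with hS1
  set S2 : Finset Gd.ConnectedComponent := Sfull.erase c1 with hS2
  have hc1Sfull : c1 ∈ Sfull := by
    rw [hSfull]
    exact Finset.mem_erase.mpr ⟨hc1v, Finset.mem_univ _⟩
  have hcvS1 : cv ∉ S1 := by
    rw [hS1, Finset.mem_singleton]
    exact fun h => hc1v h.symm
  have hcvS2 : cv ∉ S2 := fun h => hcvSfull (Finset.mem_of_mem_erase h)
  have hS12 : Disjoint S1 S2 := by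
    rw [Finset.disjoint_left]
    intro x hx hx2
    rw [hS1, Finset.mem_singleton] at hx
    exact (Finset.mem_erase.mp hx2).1 hx
  have hKq : K = ∑ c ∈ S1, karr c + ∑ c ∈ S2, karr c := by
    rw [hS1, Finset.sum_singleton, hK, ← Finset.insert_erase hc1Sfull,
      Finset.sum_insert (Finset.notMem_erase _ _)]
  have hb0S1 : b0.1 ∉ vs S1 := by
    intro h
    have h' : Gd.connectedComponentMk b0.1 ∈ S1 := h
    rw [hS1, Finset.mem_singleton] at h'
    exact hc12 (h'.symm.trans hc2.symm)
  have ha0S2 : a0.1 ∉ vs S2 := by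
    intro h
    have h' : Gd.connectedComponentMk a0.1 ∈ S2 := h
    exact (Finset.mem_erase.mp h').1 hc1.symm
  -- generic facts about one side
  have hside : ∀ S : Finset Gd.ConnectedComponent, cv ∉ S →
      ∀ x0 : V, x0 ≠ v → x0 ∉ vs S →
      (G.induce (vs S ∪ {v})).Connected ∧
      Nat.card ↥(vs S ∪ {v}) < Nat.card V ∧
      4 * ∑ c ∈ S, karr c ≤ (TC.EinS G (vs S ∪ {v})).ncard ∧
      (G.induce (vs S ∪ {v})).edgeSet.ncard = (TC.EinS G (vs S ∪ {v})).ncard := by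
    intro S hcvS x0 hx0v hx0S
    obtain ⟨-, -, -, -, -, hcnt⟩ := IND S hcvS
    have hvnotvs : v ∉ vs S := fun hv' => hvs_ne S hcvS v hv' rfl
    refine ⟨?_, ?_, ?_, TC.ncard_induce_edgeSet G _⟩
    · rw [SimpleGraph.connected_iff]
      have hvmem : v ∈ vs S ∪ {v} := Or.inr rfl
      refine ⟨?_, ⟨⟨v, hvmem⟩⟩⟩
      have hreach : ∀ z : ↥(vs S ∪ {v}),
          (G.induce (vs S ∪ {v})).Reachable z ⟨v, hvmem⟩ := by
        rintro ⟨z, hz | hz⟩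
        · set c := Gd.connectedComponentMk z with hc
          have hcS : c ∈ S := hz
          have hc_ne : c ≠ cv := fun h => hcvS (h ▸ hcS)
          obtain ⟨z', hz', hvz'⟩ : ∃ z' ∈ c.supp, G.Adj v z' := by
            obtain ⟨wlk⟩ : G.Reachable z v := hconn.preconnected _ v
            exact TC.exists_adj_of_walk (G := G) (v := v) (s := c.supp)
              (fun p q hp hpq hqv => hsupp_cl c p q hp ⟨hpq, hsupp_ne c hc_ne p hp, hqv⟩)
              (hsupp_ne' c hc_ne) wlk rfl rfl
          have hsub : c.supp ⊆ vs S ∪ {v} := by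
            intro y hy
            rw [SimpleGraph.ConnectedComponent.mem_supp_iff] at hy
            exact Or.inl (show Gd.connectedComponentMk y ∈ S from hy ▸ hcS)
          have hzc : z ∈ c.supp := rfl
          have hr1 : (G.induce c.supp).Reachable ⟨z, hzc⟩ ⟨z', hz'⟩ :=
            (hconn_c c hc_ne).preconnected _ _
          have hr2 := TC.reachable_induce_mono hsub hr1
          exact hr2.trans (SimpleGraph.Adj.reachable (by simpa using hvz'.symm))
        · have : z = v := hz
          subst this
          exact SimpleGraph.Reachable.refl _
      intro x y
      exact (hreach x).trans (hreach y).symm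
    · rw [Nat.card_coe_set_eq, ← Set.ncard_univ V]
      refine Set.ncard_lt_ncard ?_ (Set.toFinite _)
      rw [Set.ssubset_univ_iff]
      intro h
      have hx0 : x0 ∈ vs S ∪ {v} := h ▸ Set.mem_univ x0
      rcases hx0 with h' | h'
      · exact hx0S h'
      · exact hx0v h'
    · have h1 := TC.EinS_add_NvS G (v := v) (s := vs S) hvnotvs
      omega
  obtain ⟨hconn1, hcard1, hcnt1, hedge1⟩ := hside S1 hcvS1 b0.1 hb0v hb0S1
  obtain ⟨hconn2, hcard2, hcnt2, hedge2⟩ := hside S2 hcvS2 a0.1 ha0v ha0S2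
  have ht12 : ∀ x : V, x ∈ vs S1 ∪ {v} → x ∈ vs S2 ∪ {v} → x = v := by
    intro x h1 h2
    rcases h1 with h1 | h1
    · rcases h2 with h2 | h2
      · exact absurd h2 (fun hh => Finset.disjoint_left.mp hS12 h1 hh)
      · exact h2
    · exact h1
  have hsum : (TC.EinS G (vs S1 ∪ {v})).ncard + (TC.EinS G (vs S2 ∪ {v})).ncard ≤
      G.edgeSet.ncard := by
    have hd : ∀ x y, G.Adj x y → x ∈ (vs S1 ∪ {v}) ∩ (vs S2 ∪ {v}) →
        y ∈ (vs S1 ∪ {v}) ∩ (vs S2 ∪ {v}) → False := by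
      intro x y hxy hx hy
      exact G.ne_of_adj hxy ((ht12 x hx.1 hx.2).trans (ht12 y hy.1 hy.2).symm)
    refine le_trans (TC.EinS_union_ncard G hd) ?_
    exact Set.ncard_le_ncard (TC.EinS_subset_edgeSet G _) (Set.toFinite _)
  by_cases hA1 : (TC.EinS G (vs S1 ∪ {v})).ncard ≤ 4 * (∑ c ∈ S1, karr c) + 2
  · by_cases hA2 : (TC.EinS G (vs S2 ∪ {v})).ncard ≤ 4 * (∑ c ∈ S2, karr c) + 2
    · -- glue the two side colourings
      have hna1 := hmin (∑ c ∈ S1, karr c + 1) (by omega) ↥(vs S1 ∪ {v}) inferInstance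
        (G.induce (vs S1 ∪ {v})) hconn1 (Or.inl hcard1) (by rw [hedge1]; omega)
      have hna2 := hmin (∑ c ∈ S2, karr c + 1) (by omega) ↥(vs S2 ∪ {v}) inferInstance
        (G.induce (vs S2 ∪ {v})) hconn2 (Or.inl hcard2) (by rw [hedge2]; omega)
      obtain ⟨R1', hR1le, hR1mat, hR1tri⟩ := TC.not_arrows_elim hna1
      obtain ⟨R2', hR2le, hR2mat, hR2tri⟩ := TC.not_arrows_elim hna2
      set l1 := TC.liftG (vs S1 ∪ {v}) R1' with hl1
      set l2 := TC.liftG (vs S2 ∪ {v}) R2' with hl2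
      have hglue_mat : ¬ ContainsCopy (l1 ⊔ l2)
          (Matching (∑ c ∈ S1, karr c + ∑ c ∈ S2, karr c + 1)) :=
        TC.matching_split (fun h => hR1mat (TC.liftG_copy_matching h))
          (fun h => hR2mat (TC.liftG_copy_matching h))
      have hglue_blue : ¬ ContainsCopy (G \ (l1 ⊔ l2)) (cycleGraph 3) := by
        intro hcopy
        obtain ⟨a, b, d, hab, hbd, had⟩ := TC.copy_triangle_elim hcopy
        rw [SimpleGraph.sdiff_adj] at hab hbd had
        obtain ⟨hab1, hab2⟩ := hab
        obtain ⟨hbd1, hbd2⟩ := hbd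
        obtain ⟨had1, had2⟩ := had
        simp only [SimpleGraph.sup_adj, not_or] at hab2 hbd2 had2
        have hmem3 : ∀ x : V, x ∈ vs S1 ∨ x ∈ vs S2 ∨ x = v := by
          intro x
          by_cases hxv : x = v
          · exact Or.inr (Or.inr hxv)
          · have hxf : Gd.connectedComponentMk x ∈ Sfull := by
              rw [hSfull]
              exact Finset.mem_erase.mpr ⟨hmkv' x hxv, Finset.mem_univ _⟩
            rcases eq_or_ne (Gd.connectedComponentMk x) c1 with h | h
            · exact Or.inl (show Gd.connectedComponentMk x ∈ S1 by
                rw [hS1, Finset.mem_singleton]; exact h)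
            · exact Or.inr (Or.inl (show Gd.connectedComponentMk x ∈ S2 from
                Finset.mem_erase.mpr ⟨h, hxf⟩))
        have hsides := TC.side3 (Gr := G) (v := v) (s := vs S1) (t := vs S2)
          (fun x y h hx hy => hcross S1 S2 hcvS1 hcvS2 hS12 x y h hx hy) hmem3 hab1 hbd1 had1
        rcases hsides with ⟨ha', hb', hd'⟩ | ⟨ha', hb', hd'⟩
        · exact hR1tri (TC.lift_blue ha' hb' hd' hab1 hbd1 had1
            (fun h => hab2.1 h) (fun h => hbd2.1 h) (fun h => had2.1 h))
        · exact hR2tri (TC.lift_blue ha' hb' hd' hab1 hbd1 had1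
            (fun h => hab2.2 h) (fun h => hbd2.2 h) (fun h => had2.2 h))
      have hglue_le : l1 ⊔ l2 ≤ G := sup_le (TC.liftG_le hR1le) (TC.liftG_le hR2le)
      have hnK' : n ≤ ∑ c ∈ S1, karr c + ∑ c ∈ S2, karr c := by
        by_contra hlt
        push_neg at hlt
        rcases harrow (l1 ⊔ l2) hglue_le with hred | hblue
        · exact hglue_mat (TC.copy_matching_mono (by omega) hred)
        · exact hglue_blue hblue
      omega
    · push_neg at hA2
      omega
  · push_neg at hA1
    omega
end
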